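/- For every real n×n matrix B, every local maximum of the function Q ↦ trace(Qᵀ B) on SO(n) is a global maximum: if Q₀ ∈ SO(n) is a local maximizer of Q ↦ trace(Qᵀ B) on SO(n) (with respect to the topology SO(n) inherits as a subset of the n×n real matrices), then trace(Q₀ᵀ B) ≥ trace(Qᵀ B) for all Q ∈ SO(n). -/

import Mathlib

open Matrix

variable {n : ℕ}  -- section variable for auxiliary lemmas


lemma symm_spectral {n : ℕ} (M : Matrix (Fin n) (Fin n) ℝ) (hM : Mᵀ = M) :
    ∃ (R : Matrix (Fin n) (Fin n) ℝ) (lam : Fin n → ℝ),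
      Rᵀ * R = 1 ∧ R * Rᵀ = 1 ∧ M = R * diagonal lam * Rᵀ := by
  have hH : M.IsHermitian := by
    rw [Matrix.IsHermitian, conjTranspose_eq_transpose_of_trivial, hM]
  refine ⟨hH.eigenvectorUnitary, hH.eigenvalues, ?_, ?_, ?_⟩
  · have := (Matrix.mem_unitaryGroup_iff'.mp hH.eigenvectorUnitary.2)
    rwa [Matrix.star_eq_conjTranspose, conjTranspose_eq_transpose_of_trivial] at this
  · have := (Matrix.mem_unitaryGroup_iff.mp hH.eigenvectorUnitary.2)
    rwa [Matrix.star_eq_conjTranspose, conjTranspose_eq_transpose_of_trivial] at this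
  · have := hH.spectral_theorem
    rw [Unitary.conjStarAlgAut_apply, Matrix.star_eq_conjTranspose, conjTranspose_eq_transpose_of_trivial] at this
    exact this


lemma quad_eq {n : ℕ} (R : Matrix (Fin n) (Fin n) ℝ) (lam : Fin n → ℝ)
    (v : Fin n → ℝ) :
    v ⬝ᵥ (R * diagonal lam * Rᵀ) *ᵥ v = ∑ i, lam i * ((Rᵀ *ᵥ v) i)^2 := by
  rw [← mulVec_mulVec, ← mulVec_mulVec, dotProduct_mulVec, ← mulVec_transpose]
  simp [dotProduct, mulVec_diagonal]
  ring_nf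
  refine Finset.sum_congr rfl fun i _ => by ring

lemma psd_quad_le_trace {n : ℕ} (A : Matrix (Fin n) (Fin n) ℝ) (hA : Aᵀ = A)
    (hpsd : ∀ x : Fin n → ℝ, 0 ≤ x ⬝ᵥ A *ᵥ x) (v : Fin n → ℝ) :
    v ⬝ᵥ A *ᵥ v ≤ A.trace * (v ⬝ᵥ v) := by
  obtain ⟨R, lam, hRtR, hRRt, hspec⟩ := symm_spectral A hA
  have hlam : ∀ i, 0 ≤ lam i := by
    intro i
    have := hpsd (R *ᵥ Pi.single i 1)
    rw [hspec, quad_eq] at this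
    have hw : Rᵀ *ᵥ (R *ᵥ Pi.single i 1) = Pi.single i 1 := by
      rw [mulVec_mulVec, hRtR, one_mulVec]
    rw [hw] at this
    simpa [Pi.single_apply, sq] using this
  have htr : A.trace = ∑ i, lam i := by
    rw [hspec, Matrix.trace_mul_cycle, hRtR, Matrix.one_mul, Matrix.trace_diagonal]
  have hnorm : (Rᵀ *ᵥ v) ⬝ᵥ (Rᵀ *ᵥ v) = v ⬝ᵥ v := by
    rw [dotProduct_mulVec, ← mulVec_transpose, mulVec_mulVec, transpose_transpose, hRRt,
      one_mulVec]
  rw [hspec, quad_eq, ← hspec, htr, Finset.sum_mul]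
  apply Finset.sum_le_sum
  intro i _
  have h1 : ((Rᵀ *ᵥ v) i)^2 ≤ v ⬝ᵥ v := by
    rw [← hnorm]
    have : (Rᵀ *ᵥ v) ⬝ᵥ (Rᵀ *ᵥ v) = ∑ j, ((Rᵀ *ᵥ v) j)^2 := by
      simp [dotProduct, sq]
    rw [this]
    exact Finset.single_le_sum (f := fun j => ((Rᵀ *ᵥ v) j)^2) (fun j _ => sq_nonneg _) (Finset.mem_univ i)
  exact mul_le_mul_of_nonneg_left h1 (hlam i)


lemma dp_self_nonneg {n : ℕ} (x : Fin n → ℝ) : 0 ≤ x ⬝ᵥ x := by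
  simp only [dotProduct]
  exact Finset.sum_nonneg fun i _ => mul_self_nonneg _

lemma quad_le_self {n : ℕ} (S : Matrix (Fin n) (Fin n) ℝ) (hS : Sᵀ * S = 1)
    (x : Fin n → ℝ) : x ⬝ᵥ S *ᵥ x ≤ x ⬝ᵥ x := by
  have hSx : (S *ᵥ x) ⬝ᵥ (S *ᵥ x) = x ⬝ᵥ x := by
    rw [dotProduct_mulVec, ← mulVec_transpose, mulVec_mulVec, hS, one_mulVec]
  have hcs : (x ⬝ᵥ S *ᵥ x) ^ 2 ≤ (x ⬝ᵥ x) * ((S *ᵥ x) ⬝ᵥ (S *ᵥ x)) := by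
    have := Finset.sum_mul_sq_le_sq_mul_sq Finset.univ x (S *ᵥ x)
    simpa [dotProduct, sq] using this
  rw [hSx] at hcs
  nlinarith [dp_self_nonneg x, sq_nonneg (x ⬝ᵥ S *ᵥ x - x ⬝ᵥ x)]

lemma ortho_det_neg_trace_le {n : ℕ} (S : Matrix (Fin n) (Fin n) ℝ)
    (hS : Sᵀ * S = 1) (hdet : S.det = -1) : S.trace ≤ (n : ℝ) - 2 := by
  have hSSt : S * Sᵀ = 1 := mul_eq_one_comm.mp hS
  -- det (1 + S) = 0
  have hd0 : (1 + S).det = 0 := by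
    have h1 : S * (Sᵀ + 1) = 1 + S := by
      rw [Matrix.mul_add, hSSt, Matrix.mul_one, add_comm]
    have h2 : (1 + S).det = S.det * (Sᵀ + 1).det := by rw [← det_mul, h1]
    have h3 : (Sᵀ + 1).det = (1 + S).det := by
      have ht : Sᵀ + 1 = (1 + S)ᵀ := by simp [add_comm]
      rw [ht, det_transpose]
    rw [h3, hdet] at h2
    linarith
  obtain ⟨v, hv0, hv⟩ := (Matrix.exists_mulVec_eq_zero_iff).mpr hd0
  have hSv : S *ᵥ v = -v := by
    have := hv
    rw [Matrix.add_mulVec, one_mulVec] at this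
    linear_combination (norm := module) this
  set A : Matrix (Fin n) (Fin n) ℝ := 1 - (2⁻¹ : ℝ) • (S + Sᵀ) with hAdef
  have hAsymm : Aᵀ = A := by
    simp [hAdef, transpose_add, add_comm]
  have hquad : ∀ x : Fin n → ℝ, x ⬝ᵥ A *ᵥ x = x ⬝ᵥ x - x ⬝ᵥ S *ᵥ x := by
    intro x
    have hsymq : x ⬝ᵥ Sᵀ *ᵥ x = x ⬝ᵥ S *ᵥ x := by
      rw [mulVec_transpose, dotProduct_comm, ← dotProduct_mulVec]
    simp [hAdef, sub_mulVec, Matrix.smul_mulVec, add_mulVec, dotProduct_sub,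
      dotProduct_smul, dotProduct_add, one_mulVec, hsymq]
    ring
  have hpsd : ∀ x : Fin n → ℝ, 0 ≤ x ⬝ᵥ A *ᵥ x := by
    intro x
    rw [hquad]
    have := quad_le_self S hS x
    linarith
  have htrA : A.trace = (n : ℝ) - S.trace := by
    simp [hAdef, trace_sub, trace_smul, trace_add, trace_transpose, trace_one]
    ring
  have hvv : 0 < v ⬝ᵥ v := by
    rcases lt_or_eq_of_le (dp_self_nonneg v) with h | h
    · exact h
    · exact absurd (dotProduct_self_eq_zero.mp h.symm) hv0
  have key := psd_quad_le_trace A hAsymm hpsd v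
  rw [hquad, hSv, htrA] at key
  have : v ⬝ᵥ (-v) = -(v ⬝ᵥ v) := by simp
  rw [this] at key
  nlinarith [hvv]




private lemma std_transpose (a b : Fin n) :
    (Matrix.single a b (1:ℝ))ᵀ = Matrix.single b a 1 := by
  ext k l
  simp [Matrix.single, transpose_apply, and_comm]

/-- Givens rotation in the (i,j) plane. -/
noncomputable def givens (i j : Fin n) (t : ℝ) : Matrix (Fin n) (Fin n) ℝ :=
  1 + (Real.cos t - 1) • (Matrix.single i i 1 + Matrix.single j j 1)
    + Real.sin t • (Matrix.single j i 1 - Matrix.single i j 1)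

lemma givens_zero (i j : Fin n) : givens i j 0 = 1 := by
  simp [givens]

lemma givens_continuous (i j : Fin n) : Continuous fun t => givens i j t := by
  unfold givens
  fun_prop

lemma givens_transpose (i j : Fin n) (t : ℝ) :
    (givens i j t)ᵀ = givens i j (-t) := by
  unfold givens
  rw [Real.cos_neg, Real.sin_neg]
  simp only [transpose_add, transpose_smul, transpose_one, transpose_sub, std_transpose]
  module

lemma givens_orthogonal (i j : Fin n) (hij : i ≠ j) (t : ℝ) :
    (givens i j t)ᵀ * givens i j t = 1 := by
  rw [givens_transpose]
  set P : Matrix (Fin n) (Fin n) ℝ := Matrix.single i i 1 + Matrix.single j j 1 with hP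
  set K : Matrix (Fin n) (Fin n) ℝ := Matrix.single j i 1 - Matrix.single i j 1 with hK
  have hP2 : P * P = P := by
    simp [hP, Matrix.add_mul, Matrix.mul_add, single_mul_single_same,
      single_mul_single_of_ne, hij, hij.symm]
  have hK2 : K * K = -P := by
    simp [hK, hP, Matrix.sub_mul, Matrix.mul_sub, single_mul_single_same,
      single_mul_single_of_ne, hij, hij.symm]
    abel
  have hPK : P * K = K := by
    simp [hP, hK, Matrix.add_mul, Matrix.mul_sub, Matrix.mul_add, Matrix.sub_mul,
      single_mul_single_same, single_mul_single_of_ne, hij, hij.symm]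
  have hKP : K * P = K := by
    simp [hP, hK, Matrix.add_mul, Matrix.mul_sub, Matrix.mul_add, Matrix.sub_mul,
      single_mul_single_same, single_mul_single_of_ne, hij, hij.symm]
    abel
  unfold givens
  rw [Real.cos_neg, Real.sin_neg]
  rw [← hP, ← hK]
  have expand : (1 + (Real.cos t - 1) • P + (-Real.sin t) • K) *
      (1 + (Real.cos t - 1) • P + Real.sin t • K)
      = 1 + ((Real.cos t - 1) + (Real.cos t - 1) + (Real.cos t - 1)^2 + Real.sin t ^2) • P
        + ((Real.sin t + (-Real.sin t)) + (Real.cos t - 1) * (-Real.sin t)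
            + (Real.cos t - 1) * Real.sin t) • K := by
    simp only [Matrix.add_mul, Matrix.mul_add, Matrix.one_mul, Matrix.mul_one,
      Matrix.smul_mul, Matrix.mul_smul, hP2, hK2, hPK, hKP, smul_smul, smul_neg]
    module
  rw [expand]
  have h1 : (Real.cos t - 1) + (Real.cos t - 1) + (Real.cos t - 1)^2 + Real.sin t ^2 = 0 := by
    have := Real.sin_sq_add_cos_sq t
    nlinarith
  have h2 : (Real.sin t + (-Real.sin t)) + (Real.cos t - 1) * (-Real.sin t)
      + (Real.cos t - 1) * Real.sin t = 0 := by ring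
  rw [h1, h2]
  simp

lemma givens_det (i j : Fin n) (hij : i ≠ j) (t : ℝ) : (givens i j t).det = 1 := by
  have hsq : ∀ s : ℝ, ((givens i j s).det) ^ 2 = 1 := by
    intro s
    have := congrArg Matrix.det (givens_orthogonal i j hij s)
    rwa [det_mul, det_transpose, ← sq, det_one] at this
  have hcont : Continuous fun s => (givens i j s).det :=
    (givens_continuous i j).matrix_det
  by_contra h
  have hneg : (givens i j t).det = -1 := by
    have h2 := hsq t
    rcases sq_eq_one_iff.mp h2 with h1 | h1
    all_goals first | exact absurd h1 h | exact h1
  -- IVT: det is continuous, = 1 at 0, = -1 at t, so = 0 somewhere, contradiction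
  have h0 : (givens i j 0).det = 1 := by rw [givens_zero]; exact det_one
  have : ∃ s, (givens i j s).det = 0 := by
    rcases le_total 0 t with ht | ht
    · have := intermediate_value_Icc' (by exact ht) (hcont.continuousOn (s := Set.Icc 0 t))
      have h0mem : (0:ℝ) ∈ Set.Icc ((givens i j t).det) ((givens i j 0).det) := by
        rw [h0, hneg]; constructor <;> norm_num
      obtain ⟨s, _, hs⟩ := this h0mem
      exact ⟨s, hs⟩
    · have := intermediate_value_Icc (by exact ht) (hcont.continuousOn (s := Set.Icc t 0))
      have h0mem : (0:ℝ) ∈ Set.Icc ((givens i j t).det) ((givens i j 0).det) := by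
        rw [h0, hneg]; constructor <;> norm_num
      obtain ⟨s, _, hs⟩ := this h0mem
      exact ⟨s, hs⟩
  obtain ⟨s, hs⟩ := this
  have := hsq s
  rw [hs] at this
  norm_num at this

lemma trace_stdBasis_mul (a b : Fin n) (N : Matrix (Fin n) (Fin n) ℝ) :
    (Matrix.single a b (1:ℝ) * N).trace = N b a := by
  simp [Matrix.trace, Matrix.diag, mul_apply, Matrix.single, ite_and, Finset.sum_ite_eq]

lemma givens_trace_mul (i j : Fin n) (t : ℝ) (N : Matrix (Fin n) (Fin n) ℝ) :
    ((givens i j t)ᵀ * N).trace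
      = N.trace + (Real.cos t - 1) * (N i i + N j j) - Real.sin t * (N i j - N j i) := by
  rw [givens_transpose]
  unfold givens
  rw [Real.cos_neg, Real.sin_neg]
  simp only [Matrix.add_mul, Matrix.smul_mul, Matrix.one_mul, Matrix.sub_mul,
    trace_add, trace_smul, trace_sub, trace_stdBasis_mul]
  simp only [smul_eq_mul]
  ring



lemma extract_conditions (A C : ℝ)
    (h : ∀ᶠ t in nhds (0:ℝ), (Real.cos t - 1) * A - Real.sin t * C ≤ 0) :
    C = 0 ∧ 0 ≤ A := by
  obtain ⟨δ, hδpos, hδ⟩ := Metric.eventually_nhds_iff.mp h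
  have hδ' : ∀ t : ℝ, |t| < δ → (Real.cos t - 1) * A - Real.sin t * C ≤ 0 := by
    intro t ht
    exact hδ (by simpa [Real.dist_eq] using ht)
  set ε := min δ 1 with hε
  have hεpos : 0 < ε := lt_min hδpos one_pos
  have hbound : ∀ t ∈ Set.Ioo (0:ℝ) ε, |C| ≤ Real.sin t / (1 + Real.cos t) * A := by
    intro t ⟨ht0, htε⟩
    have ht1 : t < 1 := lt_of_lt_of_le htε (min_le_right _ _)
    have htδ : |t| < δ := by
      rw [abs_of_pos ht0]; exact lt_of_lt_of_le htε (min_le_left _ _)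
    have htδ' : |(-t)| < δ := by rwa [abs_neg]
    have h1 := hδ' t htδ
    have h2 := hδ' (-t) htδ'
    rw [Real.cos_neg, Real.sin_neg] at h2
    have hs : 0 < Real.sin t := Real.sin_pos_of_pos_of_lt_pi ht0 (by linarith [Real.pi_gt_three])
    have hc : 0 < Real.cos t := Real.cos_pos_of_mem_Ioo
      ⟨by linarith [Real.pi_gt_three], by linarith [Real.pi_gt_three]⟩
    have habs : Real.sin t * |C| ≤ (1 - Real.cos t) * A := by
      rcases abs_cases C with ⟨hC, _⟩ | ⟨hC, _⟩ <;> rw [hC] <;> nlinarith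
    have hid : (1 - Real.cos t) * (1 + Real.cos t) = Real.sin t * Real.sin t := by
      have := Real.sin_sq_add_cos_sq t
      nlinarith
    rw [div_mul_eq_mul_div, le_div_iff₀ (by linarith)]
    have e1 : Real.sin t * |C| * (1 + Real.cos t) ≤ (1 - Real.cos t) * A * (1 + Real.cos t) :=
      mul_le_mul_of_nonneg_right habs (by linarith)
    have step : Real.sin t * (|C| * (1 + Real.cos t)) ≤ Real.sin t * (Real.sin t * A) := by
      calc Real.sin t * (|C| * (1 + Real.cos t))
          = Real.sin t * |C| * (1 + Real.cos t) := by ring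
        _ ≤ (1 - Real.cos t) * A * (1 + Real.cos t) := e1
        _ = Real.sin t * (Real.sin t * A) := by linear_combination A * hid
    exact le_of_mul_le_mul_left (by nlinarith) hs
  have htend : Filter.Tendsto (fun t => Real.sin t / (1 + Real.cos t) * A)
      (nhdsWithin 0 (Set.Ioi 0)) (nhds 0) := by
    have hca : ContinuousAt (fun t => Real.sin t / (1 + Real.cos t) * A) 0 := by
      apply ContinuousAt.mul _ continuousAt_const
      exact Real.continuous_sin.continuousAt.div
        (continuousAt_const.add Real.continuous_cos.continuousAt) (by norm_num)
    have h0 : Real.sin 0 / (1 + Real.cos 0) * A = 0 := by norm_num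
    have := hca.tendsto
    rw [h0] at this
    exact this.mono_left nhdsWithin_le_nhds
  have hCabs : |C| ≤ 0 := by
    refine ge_of_tendsto htend ?_
    filter_upwards [Ioo_mem_nhdsGT_of_mem (by constructor <;> [exact le_refl 0; exact hεpos])]
      with t ht using hbound t ht
  have hC0 : C = 0 := abs_eq_zero.mp (le_antisymm hCabs (abs_nonneg C))
  refine ⟨hC0, ?_⟩
  set t₀ := ε / 2 with ht₀
  have ht₀pos : 0 < t₀ := by positivity
  have ht₀lt : t₀ < ε := by linarith
  have h1 := hδ' t₀ (by rw [abs_of_pos ht₀pos]; exact lt_of_lt_of_le ht₀lt (min_le_left _ _))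
  rw [hC0, mul_zero, sub_zero] at h1
  have hs : 0 < Real.sin t₀ := Real.sin_pos_of_pos_of_lt_pi ht₀pos
    (by
      have : t₀ < 1 := lt_of_lt_of_le ht₀lt (min_le_right _ _)
      linarith [Real.pi_gt_three])
  have hclt : Real.cos t₀ < 1 := by
    nlinarith [Real.sin_sq_add_cos_sq t₀, Real.cos_le_one t₀]
  nlinarith


lemma mul_ortho {X Y : Matrix (Fin n) (Fin n) ℝ} (hX : Xᵀ * X = 1) (hY : Yᵀ * Y = 1) :
    (X * Y)ᵀ * (X * Y) = 1 := by
  rw [transpose_mul, Matrix.mul_assoc, ← Matrix.mul_assoc Xᵀ, hX, Matrix.one_mul, hY]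

lemma curve_cond (B Q₀ R : Matrix (Fin n) (Fin n) ℝ)
    (hQ₀o : Q₀ᵀ * Q₀ = 1) (hQ₀d : Q₀.det = 1)
    (hRo : Rᵀ * R = 1) (hRo' : R * Rᵀ = 1)
    (hloc : IsLocalMaxOn (fun Q : Matrix (Fin n) (Fin n) ℝ => (Qᵀ * B).trace)
      {Q : Matrix (Fin n) (Fin n) ℝ | Qᵀ * Q = 1 ∧ Q.det = 1} Q₀)
    (i j : Fin n) (hij : i ≠ j) :
    (Rᵀ * (Q₀ᵀ * B) * R) i j = (Rᵀ * (Q₀ᵀ * B) * R) j i ∧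
      0 ≤ (Rᵀ * (Q₀ᵀ * B) * R) i i + (Rᵀ * (Q₀ᵀ * B) * R) j j := by
  set N := Rᵀ * (Q₀ᵀ * B) * R with hN
  set γ : ℝ → Matrix (Fin n) (Fin n) ℝ := fun t => Q₀ * (R * givens i j t * Rᵀ) with hγ
  have hγ0 : γ 0 = Q₀ := by
    simp [hγ, givens_zero, hRo']
  have hmem : ∀ t, γ t ∈ {Q : Matrix (Fin n) (Fin n) ℝ | Qᵀ * Q = 1 ∧ Q.det = 1} := by
    intro t
    constructor
    · exact mul_ortho hQ₀o (mul_ortho (mul_ortho hRo (givens_orthogonal i j hij t))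
        (by rw [transpose_transpose, hRo']))
    · have hRR : R.det * Rᵀ.det = 1 := by rw [← det_mul, hRo', det_one]
      simp only [hγ, det_mul, hQ₀d, givens_det i j hij]
      nlinarith
  have hcont : Continuous γ := by
    exact continuous_const.matrix_mul
      ((continuous_const.matrix_mul (givens_continuous i j)).matrix_mul continuous_const)
  have htendsto : Filter.Tendsto γ (nhds 0)
      (nhdsWithin Q₀ {Q : Matrix (Fin n) (Fin n) ℝ | Qᵀ * Q = 1 ∧ Q.det = 1}) := by
    rw [tendsto_nhdsWithin_iff]
    constructor
    · have := hcont.tendsto 0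
      rwa [hγ0] at this
    · exact Filter.Eventually.of_forall hmem
  have hev : ∀ᶠ t in nhds (0:ℝ), ((γ t)ᵀ * B).trace ≤ (Q₀ᵀ * B).trace :=
    htendsto.eventually hloc
  have htr : ∀ t, ((γ t)ᵀ * B).trace = ((givens i j t)ᵀ * N).trace := by
    intro t
    have e1 : (γ t)ᵀ * B = R * ((givens i j t)ᵀ * (Rᵀ * (Q₀ᵀ * B))) := by
      simp only [hγ, transpose_mul, transpose_transpose, Matrix.mul_assoc]
    rw [e1, Matrix.trace_mul_comm, hN]
    simp only [Matrix.mul_assoc]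
  have htrN : N.trace = (Q₀ᵀ * B).trace := by
    rw [hN, Matrix.trace_mul_cycle, ← Matrix.mul_assoc, ← Matrix.trace_mul_cycle, hRo',
      Matrix.mul_one]
  have hev2 : ∀ᶠ t in nhds (0:ℝ),
      (Real.cos t - 1) * (N i i + N j j) - Real.sin t * (N i j - N j i) ≤ 0 := by
    filter_upwards [hev] with t ht
    rw [htr t, givens_trace_mul, htrN] at ht
    linarith
  obtain ⟨hC, hA⟩ := extract_conditions _ _ hev2
  exact ⟨by linarith [sub_eq_zero.mp hC], hA⟩

lemma diag_le_one (P : Matrix (Fin n) (Fin n) ℝ) (h : Pᵀ * P = 1) (i : Fin n) :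
    P i i ≤ 1 := by
  have h1 : ∑ k, P k i * P k i = 1 := by
    have := congr_fun (congr_fun h i) i
    simpa [mul_apply, transpose_apply, one_apply] using this
  have h2 : P i i * P i i ≤ 1 := by
    rw [← h1]
    exact Finset.single_le_sum (f := fun k => P k i * P k i)
      (fun k _ => mul_self_nonneg _) (Finset.mem_univ i)
  nlinarith

lemma trace_mul_diagonal (X : Matrix (Fin n) (Fin n) ℝ) (d : Fin n → ℝ) :
    (X * diagonal d).trace = ∑ i, X i i * d i := by
  simp [Matrix.trace, Matrix.diag, mul_apply, diagonal, Finset.sum_ite_eq]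

/-- Paper's Proposition 8: `SO(n)` satisfies Assumption 2, i.e. every local
maximum of `Q ↦ trace(Qᵀ B)` on `SO(n)` is a global maximum. -/
theorem stmt5 {n : ℕ} (B Q₀ : Matrix (Fin n) (Fin n) ℝ)
    (hQ₀ : Q₀ᵀ * Q₀ = 1 ∧ Q₀.det = 1)
    (hloc : IsLocalMaxOn (fun Q : Matrix (Fin n) (Fin n) ℝ => (Qᵀ * B).trace)
      {Q : Matrix (Fin n) (Fin n) ℝ | Qᵀ * Q = 1 ∧ Q.det = 1} Q₀) :
    ∀ Q : Matrix (Fin n) (Fin n) ℝ, Qᵀ * Q = 1 → Q.det = 1 →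
      (Qᵀ * B).trace ≤ (Q₀ᵀ * B).trace := by
  obtain ⟨hQ₀o, hQ₀d⟩ := hQ₀
  intro Q hQo hQd
  rcases Nat.eq_zero_or_pos n with rfl | hn
  · simp [Matrix.trace]
  set M := Q₀ᵀ * B with hM
  -- first-order condition: M is symmetric
  have hsymm : Mᵀ = M := by
    ext a b
    rcases eq_or_ne a b with rfl | hab
    · rfl
    · have h := (curve_cond B Q₀ 1 hQ₀o hQ₀d (by simp) (by simp) hloc b a hab.symm).1
      simp only [transpose_one, Matrix.one_mul, Matrix.mul_one] at h
      rw [transpose_apply, hM]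
      exact h
  obtain ⟨R, lam, hRtR, hRRt, hspec⟩ := symm_spectral M hsymm
  have hdiag : Rᵀ * M * R = diagonal lam := by
    have e : Rᵀ * (R * diagonal lam * Rᵀ) * R = Rᵀ * R * diagonal lam * (Rᵀ * R) := by
      simp only [Matrix.mul_assoc]
    rw [hspec, e, hRtR, Matrix.one_mul, Matrix.mul_one]
  -- second-order condition: eigenvalue pair sums nonneg
  have heig : ∀ i j : Fin n, i ≠ j → 0 ≤ lam i + lam j := by
    intro i j hij
    have h := (curve_cond B Q₀ R hQ₀o hQ₀d hRtR hRRt hloc i j hij).2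
    rw [← hM, hdiag] at h
    simpa [diagonal_apply_eq] using h
  have hQ₀Q₀t : Q₀ * Q₀ᵀ = 1 := mul_eq_one_comm.mp hQ₀o
  have hQQt : Q * Qᵀ = 1 := mul_eq_one_comm.mp hQo
  set P := Rᵀ * (Qᵀ * Q₀) * R with hP
  have hPo : Pᵀ * P = 1 := by
    apply mul_ortho _ hRtR
    apply mul_ortho _ (mul_ortho (by rwa [transpose_transpose]) hQ₀o)
    rwa [transpose_transpose]
  have hPdet : P.det = 1 := by
    have h2 : Rᵀ.det * R.det = 1 := by
      have := congrArg Matrix.det hRtR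
      rwa [det_mul, det_one] at this
    simp only [hP, det_mul, det_transpose, hQd, hQ₀d]
    rw [det_transpose] at h2
    nlinarith
  have hPdiag : ∀ i, P i i ≤ 1 := diag_le_one P hPo
  -- trace identities
  have hlhs : (Qᵀ * B).trace = ∑ i, P i i * lam i := by
    have e1 : Qᵀ * B = Qᵀ * Q₀ * M := by
      rw [hM]
      simp only [Matrix.mul_assoc]
      rw [← Matrix.mul_assoc Q₀, hQ₀Q₀t, Matrix.one_mul]
    rw [e1, hspec, ← trace_mul_diagonal P lam]
    have e2 : Qᵀ * Q₀ * (R * diagonal lam * Rᵀ) = Qᵀ * Q₀ * R * diagonal lam * Rᵀ := by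
      simp only [Matrix.mul_assoc]
    rw [e2, Matrix.trace_mul_cycle (Qᵀ * Q₀ * R) (diagonal lam) Rᵀ]
    have e3 : Rᵀ * (Qᵀ * Q₀ * R) * diagonal lam = P * diagonal lam := by
      rw [hP]
      simp only [Matrix.mul_assoc]
    rw [e3]
  have hrhs : (Q₀ᵀ * B).trace = ∑ i, lam i := by
    rw [← hM, hspec, Matrix.trace_mul_cycle, hRtR, Matrix.one_mul, Matrix.trace_diagonal]
  rw [hlhs, hrhs]
  -- minimum eigenvalue
  obtain ⟨j₀, _, hj₀⟩ := Finset.exists_min_image Finset.univ lam ⟨⟨0, hn⟩, Finset.mem_univ _⟩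
  have hj₀' : ∀ i, lam j₀ ≤ lam i := fun i => hj₀ i (Finset.mem_univ i)
  rcases le_or_gt 0 (lam j₀) with hpos | hneg
  · apply Finset.sum_le_sum
    intro i _
    nlinarith [hPdiag i, hj₀' i]
  · -- lam j₀ < 0 case
    set d : Fin n → ℝ := fun k => if k = j₀ then -1 else 1 with hd
    set S := diagonal d * P with hS
    have hdo : (diagonal d)ᵀ * diagonal d = 1 := by
      rw [diagonal_transpose, diagonal_mul_diagonal]
      have : (fun k => d k * d k) = fun _ => (1:ℝ) := by
        funext k
        by_cases h : k = j₀ <;> simp [hd, h]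
      rw [this, diagonal_one]
    have hSo : Sᵀ * S = 1 := mul_ortho hdo hPo
    have hSdet : S.det = -1 := by
      rw [hS, det_mul, det_diagonal, hPdet, mul_one, hd]
      rw [Finset.prod_ite_eq' Finset.univ j₀ (fun _ => (-1:ℝ))]
      simp
    have htrS := ortho_det_neg_trace_le S hSo hSdet
    have htrS_eq : S.trace = (∑ i, P i i) - 2 * P j₀ j₀ := by
      have hSkk : ∀ k, S k k = d k * P k k := fun k => by
        rw [hS, diagonal_mul]
      have : S.trace = ∑ k, d k * P k k := by
        rw [Matrix.trace]
        exact Finset.sum_congr rfl fun k _ => hSkk k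
      rw [this]
      have e : ∀ k, d k * P k k = P k k - (if k = j₀ then 2 * P k k else 0) := by
        intro k
        by_cases h : k = j₀ <;> simp [hd, h] <;> ring
      rw [Finset.sum_congr rfl fun k _ => e k, Finset.sum_sub_distrib,
        Finset.sum_ite_eq' Finset.univ j₀ (fun k => 2 * P k k)]
      simp
    -- assemble
    set E := Finset.univ.erase j₀ with hE
    have hsplit : ∀ f : Fin n → ℝ, ∑ i ∈ E, f i + f j₀ = ∑ i, f i := fun f =>
      Finset.sum_erase_add _ _ (Finset.mem_univ j₀)
    have hsum1 : ∑ i ∈ E, (1 - P i i) * (-lam j₀) ≤ ∑ i ∈ E, (1 - P i i) * lam i := by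
      apply Finset.sum_le_sum
      intro i hi
      have hij : i ≠ j₀ := (Finset.mem_erase.mp hi).1
      have h1 := heig i j₀ hij
      have h2 := hPdiag i
      nlinarith
    have hsum3 : ∑ i ∈ E, (1 - P i i) = (∑ i : Fin n, (1 - P i i)) - (1 - P j₀ j₀) := by
      rw [← hsplit (fun i => 1 - P i i)]
      ring
    have hcard : ∑ _i : Fin n, (1:ℝ) = n := by simp
    have hdistr : ∑ i : Fin n, (1 - P i i) = (n : ℝ) - ∑ i, P i i := by
      rw [Finset.sum_sub_distrib, hcard]
    have heq : (n : ℝ) - 2 - S.trace = (∑ i ∈ E, (1 - P i i)) - (1 - P j₀ j₀) := by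
      rw [hsum3, hdistr, htrS_eq]
      ring
    have hfinal2 : 0 ≤ (-lam j₀) * ((∑ i ∈ E, (1 - P i i)) - (1 - P j₀ j₀)) := by
      rw [← heq]
      apply mul_nonneg (by linarith) (by linarith)
    have hdist : ∑ i : Fin n, (1 - P i i) * lam i = (∑ i, lam i) - ∑ i, P i i * lam i := by
      rw [← Finset.sum_sub_distrib]
      exact Finset.sum_congr rfl fun i _ => by ring
    have hchain : (0:ℝ) ≤ ∑ i : Fin n, (1 - P i i) * lam i := by
      calc (0:ℝ) ≤ (-lam j₀) * ((∑ i ∈ E, (1 - P i i)) - (1 - P j₀ j₀)) := hfinal2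
        _ = (∑ i ∈ E, (1 - P i i)) * (-lam j₀) + (1 - P j₀ j₀) * lam j₀ := by ring
        _ = (∑ i ∈ E, (1 - P i i) * (-lam j₀)) + (1 - P j₀ j₀) * lam j₀ := by
            rw [Finset.sum_mul]
        _ ≤ (∑ i ∈ E, (1 - P i i) * lam i) + (1 - P j₀ j₀) * lam j₀ := by linarith
        _ = ∑ i : Fin n, (1 - P i i) * lam i := hsplit _
    linarith [hdist ▸ hchain]
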